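/- Let n be an odd positive integer, τ with Im τ > 0, and q = exp(2πiτ). Then ∑_{k=0}^{n-1} (-1)^k q^{k²/(2n)} θ₁((π + kπτ)/n | τ)^n = 0, where θ₁ is the first Jacobi theta function and q^{k²/(2n)} = exp(πik²τ/n). -/

import Mathlib

open Complex Finset

/-- The first Jacobi theta function
`θ₁(z|τ) = 2 ∑_{n≥0} (-1)^n q^{(2n+1)²/8} sin((2n+1)z)` with `q = exp(2πiτ)`,
so that `q^{(2n+1)²/8} = exp(π i τ (2n+1)²/4)`. -/
noncomputable def theta1 (z τ : ℂ) : ℂ :=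
  2 * ∑' n : ℕ, (-1 : ℂ) ^ n *
    Complex.exp (Real.pi * Complex.I * τ * (2 * n + 1) ^ 2 / 4) *
    Complex.sin ((2 * n + 1) * z)


namespace ThetaAux

noncomputable def g (τ z : ℂ) (r : ℤ) : ℂ :=
  Complex.exp (Real.pi * I * τ * (r + 1/2)^2 + Real.pi * I * (r + 1/2) + 2 * (r + 1/2) * I * z)

lemma g_eq (τ z : ℂ) (r : ℤ) :
    g τ z r = Complex.exp (Real.pi * I * τ / 4 + Real.pi * I / 2 + I * z) *
      jacobiTheta₂_term r ((z + Real.pi/2)/Real.pi + τ/2) τ := by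
  rw [g, jacobiTheta₂_term, ← Complex.exp_add]
  congr 1
  have hπ : (Real.pi : ℂ) ≠ 0 := by simpa using Real.pi_ne_zero
  field_simp
  ring

lemma summable_norm_g (τ z : ℂ) (hτ : 0 < τ.im) :
    Summable fun r : ℤ => ‖g τ z r‖ := by
  have h : Summable fun r : ℤ => ‖jacobiTheta₂_term r ((z + Real.pi/2)/Real.pi + τ/2) τ‖ := by
    refine (summable_pow_mul_jacobiTheta₂_term_bound
      |((z + Real.pi/2)/Real.pi + τ/2).im| hτ 0).of_nonneg_of_le
      (fun _ => norm_nonneg _) (fun r => ?_)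
    simp only [pow_zero, one_mul]
    exact norm_jacobiTheta₂_term_le hτ le_rfl le_rfl r
  simpa only [funext fun r => g_eq τ z r, norm_mul] using h.mul_left _

lemma summable_g (τ z : ℂ) (hτ : 0 < τ.im) : Summable (g τ z) :=
  (summable_norm_g τ z hτ).of_norm

lemma exp_pi_I_half : Complex.exp (Real.pi * I / 2) = I := by
  have h : (Real.pi : ℂ) * I / 2 = (↑(Real.pi / 2) : ℂ) * I := by push_cast; ring
  rw [h, Complex.exp_mul_I]
  simp [← Complex.ofReal_cos, ← Complex.ofReal_sin, Real.cos_pi_div_two, Real.sin_pi_div_two]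

lemma exp_pi_I_nat (m : ℕ) : Complex.exp (Real.pi * I * m) = (-1 : ℂ)^m := by
  have h : (Real.pi : ℂ) * I * m = (m : ℂ) * (Real.pi * I) := by ring
  rw [h, Complex.exp_nat_mul, Complex.exp_pi_mul_I]

lemma exp_neg_pi_I_nat (m : ℕ) : Complex.exp (-(Real.pi * I * m)) = (-1 : ℂ)^m := by
  have h : -((Real.pi : ℂ) * I * m) = (m : ℂ) * (-(Real.pi * I)) := by ring
  rw [h, Complex.exp_nat_mul, Complex.exp_neg, Complex.exp_pi_mul_I]
  norm_num

lemma g_pair (τ z : ℂ) (m : ℕ) :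
    g τ z m + g τ z (-(m+1)) =
      -(2 * ((-1:ℂ)^m * Complex.exp (Real.pi * I * τ * (2*m+1)^2/4) *
        Complex.sin ((2*m+1) * z))) := by
  have h1 : g τ z m = Complex.exp (Real.pi * I * τ * ((m:ℂ)+1/2)^2) *
      ((-1:ℂ)^m * I * Complex.exp (I * ((2*m+1)*z))) := by
    rw [g]
    have e : (Real.pi : ℂ) * I * τ * (((m:ℤ):ℂ) + 1/2)^2 + Real.pi * I * (((m:ℤ):ℂ) + 1/2)
        + 2 * (((m:ℤ):ℂ) + 1/2) * I * z
        = (Real.pi * I * τ * ((m:ℂ)+1/2)^2) + ((Real.pi * I * m) + (Real.pi * I / 2)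
          + (I * ((2*m+1)*z))) := by push_cast; ring
    rw [e, Complex.exp_add, Complex.exp_add, Complex.exp_add, exp_pi_I_half, exp_pi_I_nat]
  have h2 : g τ z (-(m+1)) = Complex.exp (Real.pi * I * τ * ((m:ℂ)+1/2)^2) *
      ((-1:ℂ)^m * (-I) * Complex.exp (-(I * ((2*m+1)*z)))) := by
    rw [g]
    have e : (Real.pi : ℂ) * I * τ * (((-(m+1):ℤ):ℂ) + 1/2)^2 + Real.pi * I * (((-(m+1):ℤ):ℂ) + 1/2)
        + 2 * (((-(m+1):ℤ):ℂ) + 1/2) * I * z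
        = (Real.pi * I * τ * ((m:ℂ)+1/2)^2) + ((-(Real.pi * I * m)) + (-(Real.pi * I / 2))
          + (-(I * ((2*m+1)*z)))) := by push_cast; ring
    rw [e, Complex.exp_add, Complex.exp_add, Complex.exp_add, exp_neg_pi_I_nat,
      Complex.exp_neg, exp_pi_I_half]
    field_simp
    rw [Complex.I_sq]; ring
  have e2 : (Real.pi : ℂ) * I * τ * (2*m+1)^2/4 = Real.pi * I * τ * ((m:ℂ)+1/2)^2 := by ring
  rw [h1, h2, e2, Complex.sin]
  ring_nf

lemma theta1_eq (τ z : ℂ) (hτ : 0 < τ.im) : theta1 z τ = -∑' r : ℤ, g τ z r := by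
  have hs := summable_g τ z hτ
  have h1 : Summable fun m : ℕ => g τ z (m : ℤ) :=
    hs.comp_injective (fun a b h => by exact_mod_cast h)
  have h2 : Summable fun m : ℕ => g τ z (-((m : ℤ) + 1)) :=
    hs.comp_injective (fun a b h => by omega)
  rw [tsum_of_nat_of_neg_add_one h1 h2, theta1, ← Summable.tsum_add h1 h2]
  have : ∀ m : ℕ, g τ z (m:ℤ) + g τ z (-((m:ℤ)+1)) =
      -(2 * ((-1:ℂ)^m * Complex.exp (Real.pi * I * τ * (2*m+1)^2/4) *
        Complex.sin ((2*m+1) * z))) := fun m => by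
    have := g_pair τ z m
    simpa using this
  rw [tsum_congr this, tsum_neg, tsum_mul_left]
  ring


theorem summable_norm_prod {f : ℤ → ℂ} (hf : Summable fun r => ‖f r‖) (N : ℕ) :
    Summable fun v : Fin N → ℤ => ∏ j, ‖f (v j)‖ := by
  induction N with
  | zero => exact Summable.of_finite
  | succ N ih =>
    have key := Summable.mul_of_nonneg hf ih
      (fun _ => norm_nonneg _) (fun v => Finset.prod_nonneg fun _ _ => norm_nonneg _)
    rw [← (Fin.consEquiv (fun _ : Fin (N+1) => ℤ)).summable_iff]
    refine key.congr fun p => ?_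
    rw [Function.comp_apply, Fin.prod_univ_succ]
    simp [Fin.consEquiv]

theorem tsum_pow {f : ℤ → ℂ} (hf : Summable fun r => ‖f r‖) (N : ℕ) :
    (∑' r, f r)^N = ∑' v : Fin N → ℤ, ∏ j, f (v j) := by
  induction N with
  | zero =>
    rw [pow_zero]
    rw [show (fun v : Fin 0 → ℤ => ∏ j, f (v j)) = fun _ => 1 by funext v; simp]
    rw [tsum_eq_single (fun i => i.elim0) (fun b hb => absurd (by funext j; exact j.elim0) hb)]
  | succ N ih =>
    have hP : Summable fun v : Fin N → ℤ => ‖∏ j, f (v j)‖ := by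
      simpa only [norm_prod] using summable_norm_prod hf N
    rw [pow_succ', ih, tsum_mul_tsum_of_summable_norm hf hP,
      ← (Fin.consEquiv (fun _ : Fin (N+1) => ℤ)).tsum_eq]
    refine tsum_congr fun p => ?_
    rw [Fin.prod_univ_succ]
    simp [Fin.consEquiv]

-- scratch: involution definition and basic facts
section
variable (n : ℕ) [NeZero n]

def sig (p : Fin n × (Fin n → ℤ)) : Fin n × (Fin n → ℤ) :=
  let m : ℤ := -((2 * (∑ j, p.2 j) + n) + (p.1 : ℕ))
  (⟨(m % n).toNat, by
    have h0 : (0:ℤ) < n := by exact_mod_cast Nat.pos_of_ne_zero (NeZero.ne n)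
    have h1 : 0 ≤ m % n := Int.emod_nonneg m (by exact_mod_cast NeZero.ne n)
    have h2 : m % n < n := Int.emod_lt_of_pos m h0
    omega⟩,
   fun j => p.2 j + m / n)

lemma sig_key (p : Fin n × (Fin n → ℤ)) :
    (((sig n p).1 : ℕ) : ℤ) = -((2 * (∑ j, p.2 j) + n) + (p.1 : ℕ))
      - n * (-((2 * (∑ j, p.2 j) + n) + (p.1 : ℕ)) / n) := by
  set m : ℤ := -((2 * (∑ j, p.2 j) + n) + (p.1 : ℕ)) with hm
  have h1 : 0 ≤ m % n := Int.emod_nonneg m (by exact_mod_cast NeZero.ne n)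
  have : (((sig n p).1 : ℕ) : ℤ) = m % n := by
    simp only [sig]
    exact Int.toNat_of_nonneg h1
  rw [this]
  have := Int.mul_ediv_add_emod m n
  omega

lemma sig_snd (p : Fin n × (Fin n → ℤ)) (j : Fin n) :
    (sig n p).2 j = p.2 j + (-((2 * (∑ j, p.2 j) + n) + (p.1 : ℕ)) / n) := rfl

lemma sig_invol : Function.Involutive (sig n) := by
  intro p
  obtain ⟨k, v⟩ := p
  have h0 : (0:ℤ) < n := by exact_mod_cast Nat.pos_of_ne_zero (NeZero.ne n)
  set m : ℤ := -((2 * (∑ j, v j) + n) + (k : ℕ)) with hm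
  set t : ℤ := m / n with ht
  have hK : (((sig n (k, v)).1 : ℕ) : ℤ) = m - n * t := sig_key n (k, v)
  have hsum : (∑ j, (sig n (k, v)).2 j) = (∑ j, v j) + n * t := by
    simp only [sig_snd]
    rw [Finset.sum_add_distrib, Finset.sum_const, Finset.card_univ, Fintype.card_fin]
    push_cast; ring
  -- second application
  have hm' : -((2 * (∑ j, (sig n (k,v)).2 j) + n) + (((sig n (k,v)).1 : ℕ) : ℤ))
      = (k : ℕ) - n * t := by
    rw [hsum, hK]; ring
  have hkn : ((k:ℕ) : ℤ) < n := by exact_mod_cast k.isLt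
  have hdiv : ((k : ℕ) - n * t) / n = -t := by
    have : ((k:ℕ) : ℤ) - n * t = (k:ℕ) + n * (-t) := by ring
    rw [this, Int.add_mul_ediv_left _ _ (by exact_mod_cast NeZero.ne n),
      Int.ediv_eq_zero_of_lt (by positivity) hkn]
    ring
  have hmod : ((k : ℕ) - n * t) % n = (k : ℕ) := by
    rw [show ((k:ℕ):ℤ) - n * t = (k:ℕ) + n * (-t) by ring, Int.add_mul_emod_self_left,
      Int.emod_eq_of_lt (by positivity) hkn]
  apply Prod.ext
  · apply Fin.ext
    show ((-((2 * (∑ j, (sig n (k,v)).2 j) + n) + (((sig n (k,v)).1 : ℕ)))) % n).toNat = (k : ℕ)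
    rw [hm', hmod]; simp
  · funext j
    show (sig n (k,v)).2 j + _ / n = v j
    rw [sig_snd, hm', hdiv]
    ring
end
section
variable (τ : ℂ) (n : ℕ)

noncomputable def zk (k : ℕ) : ℂ := (Real.pi + k * Real.pi * τ)/n

noncomputable def F (k : ℕ) (v : Fin n → ℤ) : ℂ :=
  (-1:ℂ)^k * Complex.exp (Real.pi * I * (k:ℂ)^2 * τ / n) * ∏ j, g τ (zk τ n k) (v j)

noncomputable def S1 (v : Fin n → ℤ) : ℂ := ∑ j, ((v j : ℂ) + 1/2)
noncomputable def S2 (v : Fin n → ℤ) : ℂ := ∑ j, ((v j : ℂ) + 1/2)^2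

noncomputable def E (k : ℕ) (v : Fin n → ℤ) : ℂ :=
  Real.pi * I * ((k:ℂ) + (k:ℂ)^2*τ/n
    + (τ * S2 n v + S1 n v + 2 * S1 n v * (1+(k:ℂ)*τ)/n))

lemma F_eq (hn : 0 < n) (k : ℕ) (v : Fin n → ℤ) : F τ n k v = Complex.exp (E τ n k v) := by
  have hn' : (n:ℂ) ≠ 0 := by exact_mod_cast hn.ne'
  rw [F, ← exp_pi_I_nat k]
  simp only [g, ← Complex.exp_sum, ← Complex.exp_add]
  congr 1
  have hz : ∀ j : Fin n, Real.pi * I * τ * (((v j : ℤ):ℂ) + 1/2)^2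
      + Real.pi * I * (((v j : ℤ):ℂ) + 1/2) + 2 * (((v j : ℤ):ℂ) + 1/2) * I * zk τ n k
      = Real.pi * I * (τ * ((v j:ℂ) + 1/2)^2 + ((v j:ℂ) + 1/2)
        + 2 * ((v j:ℂ) + 1/2) * (1+(k:ℂ)*τ)/n) := by
    intro j
    rw [zk]
    push_cast
    field_simp
  rw [Finset.sum_congr rfl (fun j _ => hz j), ← Finset.mul_sum, E]
  have h3 : ∑ j, (2 * ((v j:ℂ) + 1/2) * (1+(k:ℂ)*τ)/n) = 2 * S1 n v * (1+(k:ℂ)*τ)/n := by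
    rw [Finset.sum_congr rfl (fun j (_ : j ∈ univ) =>
        show 2 * ((v j:ℂ) + 1/2) * (1+(k:ℂ)*τ)/n = (2 * (1+(k:ℂ)*τ)/n) * ((v j:ℂ) + 1/2)
        from by ring), ← Finset.mul_sum, S1]
    ring
  have hS : ∑ j, (τ * ((v j:ℂ) + 1/2)^2 + ((v j:ℂ) + 1/2)
      + 2 * ((v j:ℂ) + 1/2) * (1+(k:ℂ)*τ)/n)
      = τ * S2 n v + S1 n v + 2 * S1 n v * (1+(k:ℂ)*τ)/n := by
    rw [Finset.sum_add_distrib, Finset.sum_add_distrib, ← Finset.mul_sum, h3, S1, S2]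
  rw [hS]
  ring

end

section
variable (τ : ℂ) (n : ℕ) [NeZero n]

lemma E_shift_gen (hn : 0 < n) (k K : ℕ) (v : Fin n → ℤ) (t a : ℤ)
    (ha' : a = 2 * (∑ j, v j) + (n:ℤ)) (hK : (K:ℤ) = -(a + (k:ℤ)) - n * t) :
    E τ n K (fun j => v j + t)
      = E τ n k v + Real.pi * I * (((2*t - 2*(k:ℤ) - a : ℤ)) : ℂ) := by
  have hn' : (n:ℂ) ≠ 0 := by exact_mod_cast hn.ne'
  have ha : (a:ℂ) = 2 * S1 n v := by
    rw [ha', S1, Finset.sum_add_distrib, Finset.sum_const, Finset.card_univ, Fintype.card_fin]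
    push_cast [Int.cast_sum]
    ring
  have hKc : ((K:ℕ) : ℂ) = -2 * S1 n v - (k:ℂ) - n * (t:ℂ) := by
    have h2 : ((K:ℤ) : ℂ) = ((-(a + (k:ℤ)) - n * t : ℤ) : ℂ) := congrArg (Int.cast : ℤ → ℂ) hK
    push_cast at h2
    rw [ha] at h2
    push_cast
    rw [h2]; ring
  have hS1 : S1 n (fun j => v j + t) = S1 n v + n * (t:ℂ) := by
    rw [S1, S1, Finset.sum_congr rfl (fun j (_ : j ∈ univ) =>
      show (((v j + t : ℤ) : ℂ) + 1/2) = (((v j:ℂ) + 1/2) + (t:ℂ)) from by push_cast; try ring),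
      Finset.sum_add_distrib, Finset.sum_const, Finset.card_univ, Fintype.card_fin]
    push_cast
    try ring
  have hS2 : S2 n (fun j => v j + t) = S2 n v + 2*(t:ℂ)*S1 n v + n*(t:ℂ)^2 := by
    rw [S2, S2, S1, Finset.sum_congr rfl (fun j (_ : j ∈ univ) =>
      show (((v j + t : ℤ) : ℂ) + 1/2)^2
          = ((v j:ℂ) + 1/2)^2 + 2*(t:ℂ)*((v j:ℂ)+1/2) + (t:ℂ)^2 from by push_cast; try ring),
      Finset.sum_add_distrib, Finset.sum_add_distrib, ← Finset.mul_sum,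
      Finset.sum_const, Finset.card_univ, Fintype.card_fin]
    push_cast
    try ring
  have hcast : (((2 * t - 2 * (k:ℤ) - a : ℤ)) : ℂ)
      = 2*(t:ℂ) - 2*(k:ℂ) - 2 * S1 n v := by push_cast; rw [ha]; try ring
  rw [E, E, hS1, hS2, hKc, hcast]
  field_simp
  ring

lemma F_sig (hn : 0 < n) (hodd : Odd n) (p : Fin n × (Fin n → ℤ)) :
    F τ n ((sig n p).1 : ℕ) (sig n p).2 = - F τ n (p.1:ℕ) p.2 := by
  obtain ⟨k, v⟩ := p
  set t : ℤ := (-((2 * (∑ j, v j) + (n:ℤ)) + ((k:ℕ):ℤ))) / (n:ℤ) with ht'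
  set a : ℤ := 2 * (∑ j, v j) + (n:ℤ) with ha'
  have hv : (sig n (k, v)).2 = fun j => v j + t := rfl
  have hK : ((((sig n (k,v)).1 : ℕ)):ℤ) = -(a + ((k:ℕ):ℤ)) - n * t := sig_key n (k,v)
  have hE := E_shift_gen τ n hn (k:ℕ) ((sig n (k,v)).1 : ℕ) v t a ha' hK
  rw [F_eq τ n hn, F_eq τ n hn, hv, hE, Complex.exp_add]
  set c : ℤ := 2*t - 2*((k:ℕ):ℤ) - a with hc'
  have hc : Odd c := by
    obtain ⟨w, hw⟩ := hodd
    refine ⟨t - ((k:ℕ):ℤ) - (∑ j, v j) - w - 1, ?_⟩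
    have hn2 : (n:ℤ) = 2*(w:ℤ)+1 := by exact_mod_cast hw
    rw [hc', ha', hn2]; ring
  rw [show (Real.pi:ℂ)*I*((c:ℤ):ℂ) = ((c:ℤ):ℂ) * (Real.pi*I) from by ring,
    Complex.exp_int_mul, Complex.exp_pi_mul_I, Odd.neg_one_zpow hc]
  ring

end
section
variable (τ : ℂ) (n : ℕ) [NeZero n]

lemma summable_norm_F (hτ : 0 < τ.im) (k : ℕ) :
    Summable fun v : Fin n → ℤ => ‖F τ n k v‖ := by
  have h := (summable_norm_prod (summable_norm_g τ (zk τ n k) hτ) n).mul_left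
    ‖(-1:ℂ)^k * Complex.exp (Real.pi * I * (k:ℂ)^2 * τ / n)‖
  refine h.congr fun v => ?_
  rw [F]
  simp [norm_mul, norm_prod]

lemma summable_F (hτ : 0 < τ.im) :
    Summable (fun p : Fin n × (Fin n → ℤ) => F τ n (p.1:ℕ) p.2) := by
  apply Summable.of_norm
  refine (summable_prod_of_nonneg (fun p => norm_nonneg _)).mpr
    ⟨fun k => summable_norm_F τ n hτ (k:ℕ), Summable.of_finite⟩

lemma tsum_F_eq_zero (hτ : 0 < τ.im) (hn : 0 < n) (hodd : Odd n) :
    ∑' p : Fin n × (Fin n → ℤ), F τ n (p.1:ℕ) p.2 = 0 := by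
  set FF : Fin n × (Fin n → ℤ) → ℂ := fun p => F τ n (p.1:ℕ) p.2 with hFF
  have h1 : ∑' p, FF ((sig_invol n).toPerm (sig n) p) = ∑' p, FF p :=
    Equiv.tsum_eq _ FF
  have h2 : ∀ p, FF ((sig_invol n).toPerm (sig n) p) = - FF p := fun p => by
    show FF (sig n p) = - FF p
    exact F_sig τ n hn hodd p
  rw [tsum_congr h2, tsum_neg] at h1
  linear_combination (-1/2 : ℂ) * h1

end
end ThetaAux

open ThetaAux in
theorem theta_power_sum_vanishes' (τ : ℂ) (hτ : 0 < τ.im)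
    (n : ℕ) (hn : 0 < n) (hodd : Odd n) :
    ∑ k ∈ Finset.range n, (-1 : ℂ) ^ k *
        Complex.exp (Real.pi * Complex.I * (k : ℂ) ^ 2 * τ / n) *
        theta1 ((Real.pi + k * Real.pi * τ) / n) τ ^ n = 0 := by
  haveI : NeZero n := ⟨hn.ne'⟩
  have hterm : ∀ k : ℕ, (-1 : ℂ) ^ k *
      Complex.exp (Real.pi * Complex.I * (k : ℂ) ^ 2 * τ / n) *
      theta1 ((Real.pi + k * Real.pi * τ) / n) τ ^ n
      = (-1:ℂ)^n * ∑' v : Fin n → ℤ, F τ n k v := by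
    intro k
    have hg := summable_norm_g τ (zk τ n k) hτ
    have h2 : ∑' v : Fin n → ℤ, F τ n k v
        = ((-1:ℂ)^k * Complex.exp (Real.pi * I * (k:ℂ)^2 * τ / n)) *
          ∑' v : Fin n → ℤ, ∏ j, g τ (zk τ n k) (v j) := by
      simp only [F]
      exact tsum_mul_left
    rw [show ((Real.pi : ℂ) + k * Real.pi * τ) / n = zk τ n k from rfl,
      theta1_eq τ (zk τ n k) hτ, neg_pow (∑' r : ℤ, g τ (zk τ n k) r) n, tsum_pow (f := g τ (zk τ n k)) hg n, h2]
    ring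
  calc ∑ k ∈ Finset.range n, (-1 : ℂ) ^ k *
        Complex.exp (Real.pi * Complex.I * (k : ℂ) ^ 2 * τ / n) *
        theta1 ((Real.pi + k * Real.pi * τ) / n) τ ^ n
      = ∑ k ∈ Finset.range n, ((-1:ℂ)^n * ∑' v : Fin n → ℤ, F τ n k v) :=
        Finset.sum_congr rfl (fun k _ => hterm k)
    _ = (-1:ℂ)^n * ∑ k ∈ Finset.range n, ∑' v : Fin n → ℤ, F τ n k v := by
        rw [Finset.mul_sum]
    _ = (-1:ℂ)^n * ∑ k : Fin n, ∑' v : Fin n → ℤ, F τ n (k:ℕ) v := by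
        rw [Fin.sum_univ_eq_sum_range (fun k => ∑' v : Fin n → ℤ, F τ n k v) n]
    _ = (-1:ℂ)^n * ∑' k : Fin n, ∑' v : Fin n → ℤ, F τ n (k:ℕ) v := by
        rw [tsum_fintype]
    _ = (-1:ℂ)^n * ∑' p : Fin n × (Fin n → ℤ), F τ n (p.1:ℕ) p.2 := by
        rw [Summable.tsum_prod' (summable_F τ n hτ) (fun k => (summable_norm_F τ n hτ (k:ℕ)).of_norm)]
    _ = 0 := by rw [tsum_F_eq_zero τ n hτ hn hodd, mul_zero]
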